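/- Let A be an r × c matrix with real entries whose entries are all integers and which is totally unimodular, and let b : Fin r → ℤ. Then every extreme point of the polyhedron {x : Fin c → ℝ | (∀ k, x k ≥ 0) ∧ ∀ row p, (A.mulVec x) p ≤ (b p : ℝ)} has all coordinates in ℤ. -/

import Mathlib

open Matrix

/-- Casting `mulVec` from `ℤ` to `ℝ`. -/
private lemma castMulVec {c : ℕ} (N : Matrix (Fin c) (Fin c) ℤ) (w : Fin c → ℤ) :
    (N.map (Int.cast : ℤ → ℝ)).mulVec (fun j => ((w j : ℤ) : ℝ))
      = fun j => ((N.mulVec w j : ℤ) : ℝ) := by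
  funext j
  simp [Matrix.mulVec, dotProduct]

/-- Integrality of polyhedra defined by totally unimodular matrices with
integral right-hand sides: every extreme point of
`{x ≥ 0 | A x ≤ b}` has integer coordinates. -/
theorem totallyUnimodular_polyhedron_extremePoints_integral
    (r c : ℕ) (A : Matrix (Fin r) (Fin c) ℝ)
    (hint : ∀ (p : Fin r) (k : Fin c), ∃ z : ℤ, A p k = (z : ℝ))
    (hA : A.IsTotallyUnimodular) (b : Fin r → ℤ) :
    ∀ x ∈ Set.extremePoints ℝ
      {x : Fin c → ℝ | (∀ k, 0 ≤ x k) ∧ ∀ p, A.mulVec x p ≤ (b p : ℝ)},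
      ∀ k, ∃ z : ℤ, x k = (z : ℝ) := by
  classical
  intro x hx
  obtain ⟨⟨hx0, hxb⟩, hxext⟩ := hx
  -- it suffices to find an integral vector equal to `x`
  suffices h : ∃ y : Fin c → ℤ, x = fun j => ((y j : ℤ) : ℝ) by
    obtain ⟨y, hy⟩ := h
    intro k
    exact ⟨y k, by rw [hy]⟩
  rcases Nat.eq_zero_or_pos c with hc | hc
  · exact ⟨fun j => 0, by funext j; exact absurd j.2 (by omega)⟩
  have hcne : Nonempty (Fin c) := ⟨⟨0, hc⟩⟩
  -- the combined constraint matrix and right-hand side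
  set M : Matrix (Fin r ⊕ Fin c) (Fin c) ℝ := fromRows A 1 with hM
  set β : (Fin r ⊕ Fin c) → ℝ := Sum.elim (fun p => (b p : ℝ)) 0 with hβ
  -- the set of tight constraints
  set T : Set (Fin r ⊕ Fin c) := {i | M.mulVec x i = β i} with hT
  have hMx : ∀ p, M.mulVec x (Sum.inl p) = A.mulVec x p := by
    intro p; simp [hM, fromRows_mulVec]
  have hMxr : ∀ j, M.mulVec x (Sum.inr j) = x j := by
    intro j; simp [hM, fromRows_mulVec]
  have hMv : ∀ (v : Fin c → ℝ) p, M (Sum.inl p) ⬝ᵥ v = A.mulVec v p := by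
    intro v p; rfl
  have hMvr : ∀ (v : Fin c → ℝ) j, M (Sum.inr j) ⬝ᵥ v = v j := by
    intro v j
    have h1 : M (Sum.inr j) ⬝ᵥ v = (1 : Matrix (Fin c) (Fin c) ℝ).mulVec v j := rfl
    rw [h1, Matrix.one_mulVec]
  -- Step 1: any direction orthogonal to all tight rows is zero
  have hdir : ∀ v : Fin c → ℝ, (∀ i ∈ T, M i ⬝ᵥ v = 0) → v = 0 := by
    intro v hv
    by_contra hv0
    -- bound for each constraint
    set h : (Fin r ⊕ Fin c) → ℝ := Sum.elim
      (fun p => if A.mulVec v p = 0 then 1 else ((b p : ℝ) - A.mulVec x p) / |A.mulVec v p|)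
      (fun j => if v j = 0 then 1 else x j / |v j|) with hh
    have hhpos : ∀ i, 0 < h i := by
      rintro (p | j)
      · by_cases h0 : A.mulVec v p = 0
        · simp [hh, h0]
        · have hnt : A.mulVec x p ≠ (b p : ℝ) := by
            intro heq
            exact h0 (by rw [← hMv v p]; exact hv _ (by
              show M.mulVec x (Sum.inl p) = β (Sum.inl p)
              rw [hMx]; simpa [hβ] using heq))
          have hlt : A.mulVec x p < (b p : ℝ) := lt_of_le_of_ne (hxb p) hnt
          simp only [hh, Sum.elim_inl, if_neg h0]
          exact div_pos (by linarith) (abs_pos.mpr h0)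
      · by_cases h0 : v j = 0
        · simp [hh, h0]
        · have hnt : x j ≠ 0 := by
            intro heq
            exact h0 (by rw [← hMvr v j]; exact hv _ (by
              show M.mulVec x (Sum.inr j) = β (Sum.inr j)
              rw [hMxr]; simpa [hβ] using heq))
          have hlt : 0 < x j := lt_of_le_of_ne (hx0 j) (Ne.symm hnt)
          simp only [hh, Sum.elim_inr, if_neg h0]
          exact div_pos hlt (abs_pos.mpr h0)
    set ε : ℝ := Finset.univ.inf' (by simp [Finset.univ_nonempty]) h with hε
    have hεpos : 0 < ε := by
      rw [hε, Finset.lt_inf'_iff]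
      exact fun i _ => hhpos i
    have hεle : ∀ i, ε ≤ h i := fun i => Finset.inf'_le _ (Finset.mem_univ i)
    -- feasibility of the two perturbed points
    have key : ∀ s : ℝ, |s| ≤ ε → (x + s • v) ∈
        {x : Fin c → ℝ | (∀ k, 0 ≤ x k) ∧ ∀ p, A.mulVec x p ≤ (b p : ℝ)} := by
      intro s hs
      constructor
      · intro j
        by_cases h0 : v j = 0
        · simp [h0, hx0 j]
        · have h1 : ε ≤ x j / |v j| := by simpa [hh, h0] using hεle (Sum.inr j)
          have h2 : ε * |v j| ≤ x j := by
            rw [← le_div_iff₀ (abs_pos.mpr h0)]; exact h1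
          have h3 : |s * v j| ≤ x j := by
            rw [abs_mul]
            calc |s| * |v j| ≤ ε * |v j| :=
                  mul_le_mul_of_nonneg_right hs (abs_nonneg _)
              _ ≤ x j := h2
          have := abs_le.mp h3
          have : -(x j) ≤ s * v j := this.1
          simpa [Pi.add_apply, Pi.smul_apply, smul_eq_mul] using by linarith
      · intro p
        have hlin : A.mulVec (x + s • v) p = A.mulVec x p + s * A.mulVec v p := by
          rw [Matrix.mulVec_add, Matrix.mulVec_smul]
          simp
        rw [hlin]
        by_cases h0 : A.mulVec v p = 0
        · simp [h0, hxb p]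
        · have h1 : ε ≤ ((b p : ℝ) - A.mulVec x p) / |A.mulVec v p| := by
            simpa [hh, h0] using hεle (Sum.inl p)
          have h2 : ε * |A.mulVec v p| ≤ (b p : ℝ) - A.mulVec x p := by
            rw [← le_div_iff₀ (abs_pos.mpr h0)]; exact h1
          have h3 : |s * A.mulVec v p| ≤ (b p : ℝ) - A.mulVec x p := by
            rw [abs_mul]
            calc |s| * |A.mulVec v p| ≤ ε * |A.mulVec v p| :=
                  mul_le_mul_of_nonneg_right hs (abs_nonneg _)
              _ ≤ _ := h2
          have := (abs_le.mp h3).2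
          linarith
    have h₁ := key ε (by rw [abs_of_pos hεpos])
    have h₂ := key (-ε) (by rw [abs_neg, abs_of_pos hεpos])
    have hseg : x ∈ openSegment ℝ (x + ε • v) (x + (-ε) • v) := by
      refine ⟨1/2, 1/2, by norm_num, by norm_num, by norm_num, ?_⟩
      funext j
      simp [Pi.add_apply, Pi.smul_apply, smul_eq_mul]
      ring
    have := hxext h₁ h₂ hseg
    have hεv : ε • v = 0 := by
      have h' : x + ε • v = x := this
      calc ε • v = (x + ε • v) - x := by abel
        _ = 0 := by rw [h']; abel
    exact hv0 (by
      have := smul_eq_zero.mp hεv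
      rcases this with h | h
      · exact absurd h (ne_of_gt hεpos)
      · exact h)
  -- Step 2: the tight rows span everything
  have hspan : Submodule.span ℝ (M '' T) = ⊤ := by
    by_contra hsp
    obtain ⟨φ, hφ0, hφ⟩ := Submodule.exists_dual_map_eq_bot_of_lt_top
      (lt_top_iff_ne_top.mpr hsp) inferInstance
    set v : Fin c → ℝ := fun j => φ (fun i => if j = i then 1 else 0) with hvdef
    have hφv : ∀ w, φ w = w ⬝ᵥ v := by
      intro w
      conv_lhs => rw [pi_eq_sum_univ w]
      rw [map_sum]
      simp only [_root_.map_smul, smul_eq_mul]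
      simp [dotProduct, hvdef]
    have hvz : v = 0 := by
      apply hdir
      intro i hi
      have hmem : M i ∈ Submodule.span ℝ (M '' T) :=
        Submodule.subset_span ⟨i, hi, rfl⟩
      have : φ (M i) ∈ (Submodule.span ℝ (M '' T)).map φ :=
        Submodule.mem_map_of_mem hmem
      rw [hφ] at this
      rw [← hφv]
      simpa using this
    apply hφ0
    apply LinearMap.ext
    intro w
    rw [hφv, hvz]
    simp
  -- Step 3: extract a square invertible tight subsystem
  obtain ⟨bs, hbsub, hbspan, hbind⟩ := exists_linearIndependent ℝ (M '' T)
  rw [hspan] at hbspan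
  have hbfin : bs.Finite := by
    apply hbind.finite
  haveI : Fintype bs := hbfin.fintype
  let bas : Module.Basis bs ℝ (Fin c → ℝ) :=
    Module.Basis.mk hbind (by rw [Subtype.range_coe, hbspan])
  have hcard : Fintype.card bs = c := by
    have h1 := Module.finrank_eq_card_basis bas
    rw [Module.finrank_fin_fun] at h1
    omega
  let e : Fin c ≃ bs := (Fintype.equivFinOfCardEq hcard).symm
  -- choose a tight index for each basis row
  have hchoice : ∀ j : Fin c, ∃ i : Fin r ⊕ Fin c, i ∈ T ∧ M i = (e j : Fin c → ℝ) := by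
    intro j
    obtain ⟨i, hiT, hiM⟩ := hbsub (e j).2
    exact ⟨i, hiT, hiM⟩
  choose g hgT hgM using hchoice
  have hginj : Function.Injective g := by
    intro j₁ j₂ hj
    have : (e j₁ : Fin c → ℝ) = (e j₂ : Fin c → ℝ) := by rw [← hgM, ← hgM, hj]
    exact e.injective (Subtype.ext this)
  set B : Matrix (Fin c) (Fin c) ℝ := M.submatrix g id with hB
  have hBrows : (fun j => B j) = (fun j => ((e j : Fin c → ℝ))) := by
    funext j
    funext l
    simp [hB, Matrix.submatrix_apply, hgM j]
  have hBind : LinearIndependent ℝ (fun j => B j) := by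
    rw [hBrows]
    exact hbind.comp e e.injective
  have hBU : IsUnit B := Matrix.linearIndependent_rows_iff_isUnit.mp hBind
  have hBdetU : IsUnit B.det := (Matrix.isUnit_iff_isUnit_det B).mp hBU
  -- total unimodularity gives determinant ±1
  have hMTU : M.IsTotallyUnimodular := hA.fromRows_one
  have hBdet : B.det = 1 ∨ B.det = -1 := by
    obtain ⟨s, hs⟩ := hMTU c g id hginj (fun a b h => h)
    cases s with
    | zero => exact absurd hs.symm (by simpa using hBdetU.ne_zero)
    | pos => left; exact hs.symm
    | neg => right; exact hs.symm
  -- integer versions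
  choose za hza using hint
  set Mz : Matrix (Fin r ⊕ Fin c) (Fin c) ℤ :=
    fromRows (Matrix.of za) (1 : Matrix (Fin c) (Fin c) ℤ) with hMz
  have hmap : Mz.map (Int.cast : ℤ → ℝ) = M := by
    ext i j
    rcases i with p | l
    · simp [hMz, hM, hza]
    · by_cases hjl : l = j <;> simp [hMz, hM, Matrix.one_apply, hjl]
  set Bz : Matrix (Fin c) (Fin c) ℤ := Mz.submatrix g id with hBz
  have hBmap : Bz.map (Int.cast : ℤ → ℝ) = B := by
    ext i j
    rw [hB, ← hmap]
    rfl
  have hdetcast : ((Bz.det : ℤ) : ℝ) = B.det := by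
    rw [← hBmap]
    exact RingHom.map_det (Int.castRingHom ℝ) Bz
  have hBzdetU : IsUnit Bz.det := by
    rw [Int.isUnit_iff]
    rcases hBdet with h | h
    · left
      exact_mod_cast hdetcast.trans h
    · right
      exact_mod_cast hdetcast.trans h
  -- right-hand side
  set dz : Fin c → ℤ := fun j => Sum.elim b (fun _ => 0) (g j) with hdz
  have hdzc : ∀ j, ((dz j : ℤ) : ℝ) = β (g j) := by
    intro j
    rcases hgj : g j with (p | l) <;> simp [hdz, hβ, hgj]
  have hBx : B.mulVec x = fun j => ((dz j : ℤ) : ℝ) := by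
    funext j
    have h1 : B.mulVec x j = M.mulVec x (g j) := by
      simp [hB, Matrix.mulVec, Matrix.submatrix_apply]
    rw [h1, hgT j, hdzc j]
  -- the candidate integral solution
  refine ⟨Bz⁻¹.mulVec dz, ?_⟩
  have hBy : B.mulVec (fun j => ((Bz⁻¹.mulVec dz j : ℤ) : ℝ)) = fun j => ((dz j : ℤ) : ℝ) := by
    rw [← hBmap, castMulVec]
    funext j
    congr 1
    rw [Matrix.mulVec_mulVec, Matrix.mul_nonsing_inv Bz hBzdetU, Matrix.one_mulVec]
  exact Matrix.mulVec_injective_iff_isUnit.mpr hBU (hBx.trans hBy.symm)
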